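/- Key second-order estimate for the generalized nested logit generating function: with G as in the context, for all x ∈ ℝⁿ with x > 0 it holds that ∑_{i=1}^{n} (∂²G(x)/∂x⁽ⁱ⁾²)·x⁽ⁱ⁾² ≤ (1/μ)·(1/(min_{ℓ∈L} μ_ℓ) − 1)·G(x). -/

import Mathlib

open Finset

private lemma coord_hasFDerivAt {n : ℕ} (c : ℝ) (j : Fin n) (y : Fin n → ℝ) :
    HasFDerivAt (fun z : Fin n → ℝ => c * z j)
      (c • (ContinuousLinearMap.proj j : (Fin n → ℝ) →L[ℝ] ℝ)) y := by
  simpa using ((ContinuousLinearMap.proj j : (Fin n → ℝ) →L[ℝ] ℝ).hasFDerivAt (x := y)).const_mul c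

private lemma term_hasFDerivAt {n : ℕ} (c p : ℝ) (j : Fin n) {y : Fin n → ℝ} (h : 0 < c * y j) :
    HasFDerivAt (fun z : Fin n → ℝ => (c * z j) ^ p)
      ((p * (c * y j) ^ (p - 1) * c) •
        (ContinuousLinearMap.proj j : (Fin n → ℝ) →L[ℝ] ℝ)) y := by
  have h1 : HasDerivAt (fun t : ℝ => t ^ p) (p * (c * y j) ^ (p - 1)) (c * y j) :=
    Real.hasDerivAt_rpow_const (Or.inl h.ne')
  simpa [Function.comp_def, smul_smul] using h1.comp_hasFDerivAt y (coord_hasFDerivAt c j y)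

private lemma rpow_comp_hasFDerivAt {n : ℕ} {f : (Fin n → ℝ) → ℝ} {f' : (Fin n → ℝ) →L[ℝ] ℝ}
    {y : Fin n → ℝ} (hf : HasFDerivAt f f' y) (h : 0 < f y) (p : ℝ) :
    HasFDerivAt (fun z => f z ^ p) ((p * f y ^ (p - 1)) • f') y := by
  have h1 : HasDerivAt (fun t : ℝ => t ^ p) (p * f y ^ (p - 1)) (f y) :=
    Real.hasDerivAt_rpow_const (Or.inl h.ne')
  simpa [Function.comp_def] using h1.comp_hasFDerivAt y hf

private noncomputable def Sn {n : ℕ} (c : Fin n → ℝ) (N : Finset (Fin n)) (a : ℝ)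
    (y : Fin n → ℝ) : ℝ :=
  ∑ j ∈ N, (c j * y j) ^ a

private lemma Sn_def {n : ℕ} (c : Fin n → ℝ) (N : Finset (Fin n)) (a : ℝ) (y : Fin n → ℝ) :
    Sn c N a y = ∑ j ∈ N, (c j * y j) ^ a := rfl

private noncomputable def Snder {n : ℕ} (c : Fin n → ℝ) (N : Finset (Fin n)) (a : ℝ)
    (y : Fin n → ℝ) : (Fin n → ℝ) →L[ℝ] ℝ :=
  ∑ j ∈ N, (a * (c j * y j) ^ (a - 1) * c j) •
    (ContinuousLinearMap.proj j : (Fin n → ℝ) →L[ℝ] ℝ)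

private lemma Sn_hasFDerivAt {n : ℕ} {c : Fin n → ℝ} {N : Finset (Fin n)} {a : ℝ}
    {y : Fin n → ℝ} (h : ∀ j ∈ N, 0 < c j * y j) :
    HasFDerivAt (Sn c N a) (Snder c N a y) y := by
  unfold Sn Snder
  exact HasFDerivAt.fun_sum fun j hj => term_hasFDerivAt _ _ j (h j hj)

private noncomputable def qn {n : ℕ} (c : Fin n → ℝ) (N : Finset (Fin n)) (a b : ℝ)
    (j : Fin n) (y : Fin n → ℝ) : ℝ :=
  b * Sn c N a y ^ (b - 1) * (a * (c j * y j) ^ (a - 1) * c j)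

private noncomputable def Fnder {n : ℕ} (c : Fin n → ℝ) (N : Finset (Fin n)) (a b : ℝ)
    (y : Fin n → ℝ) : (Fin n → ℝ) →L[ℝ] ℝ :=
  ∑ j ∈ N, qn c N a b j y • (ContinuousLinearMap.proj j : (Fin n → ℝ) →L[ℝ] ℝ)

private lemma Fn_hasFDerivAt {n : ℕ} {c : Fin n → ℝ} {N : Finset (Fin n)} {a b : ℝ}
    {y : Fin n → ℝ} (h : ∀ j ∈ N, 0 < c j * y j) (hS : 0 < Sn c N a y) :
    HasFDerivAt (fun z => Sn c N a z ^ b) (Fnder c N a b y) y := by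
  have h1 := rpow_comp_hasFDerivAt (Sn_hasFDerivAt h) hS b
  convert h1 using 1
  unfold Fnder Snder qn
  rw [Finset.smul_sum]
  exact Finset.sum_congr rfl fun j hj => (smul_smul _ _ _).symm

private noncomputable def Qn {n : ℕ} (c : Fin n → ℝ) (N : Finset (Fin n)) (a b : ℝ)
    (j : Fin n) (y : Fin n → ℝ) : (Fin n → ℝ) →L[ℝ] ℝ :=
  (b * Sn c N a y ^ (b - 1)) •
      (c j • (a • (((a - 1) * (c j * y j) ^ (a - 1 - 1) * c j) •
        (ContinuousLinearMap.proj j : (Fin n → ℝ) →L[ℝ] ℝ))))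
    + (a * (c j * y j) ^ (a - 1) * c j) •
      (b • (((b - 1) * Sn c N a y ^ (b - 1 - 1)) • Snder c N a y))

private lemma qn_hasFDerivAt {n : ℕ} {c : Fin n → ℝ} {N : Finset (Fin n)} {a b : ℝ}
    {y : Fin n → ℝ} (h : ∀ j ∈ N, 0 < c j * y j) (hS : 0 < Sn c N a y)
    {j : Fin n} (hj : 0 < c j * y j) :
    HasFDerivAt (qn c N a b j) (Qn c N a b j y) y := by
  unfold qn Qn
  exact ((rpow_comp_hasFDerivAt (Sn_hasFDerivAt h) hS (b - 1)).const_mul b).mul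
    (((term_hasFDerivAt (c j) (a - 1) j hj).const_mul a).mul_const (c j))

private lemma Snder_apply_single {n : ℕ} (c : Fin n → ℝ) (N : Finset (Fin n)) (a : ℝ)
    (y : Fin n → ℝ) (i : Fin n) :
    Snder c N a y (Pi.single i 1) = if i ∈ N then a * (c i * y i) ^ (a - 1) * c i else 0 := by
  unfold Snder
  simp [ContinuousLinearMap.sum_apply, Pi.single_apply, Finset.sum_ite_eq']

private lemma Qn_apply_single {n : ℕ} (c : Fin n → ℝ) (N : Finset (Fin n)) (a b : ℝ)
    (y : Fin n → ℝ) (i : Fin n) (hi : i ∈ N) :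
    Qn c N a b i y (Pi.single i 1) =
      b * Sn c N a y ^ (b - 1) * (c i * (a * ((a - 1) * (c i * y i) ^ (a - 1 - 1) * c i)))
      + a * (c i * y i) ^ (a - 1) * c i *
        (b * ((b - 1) * Sn c N a y ^ (b - 1 - 1) * (a * (c i * y i) ^ (a - 1) * c i))) := by
  unfold Qn
  simp [Snder_apply_single, hi, Pi.single_apply, mul_assoc]

private lemma nest_term_eq {n : ℕ} (c : Fin n → ℝ) (N : Finset (Fin n)) (a b : ℝ)
    (x : Fin n → ℝ) (i : Fin n) (hpos : 0 < c i * x i) :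
    (b * Sn c N a x ^ (b - 1) * (c i * (a * ((a - 1) * (c i * x i) ^ (a - 1 - 1) * c i)))
      + a * (c i * x i) ^ (a - 1) * c i *
        (b * ((b - 1) * Sn c N a x ^ (b - 1 - 1) * (a * (c i * x i) ^ (a - 1) * c i))))
      * x i ^ 2 =
      a ^ 2 * b * (b - 1) * Sn c N a x ^ (b - 1 - 1) * ((c i * x i) ^ a) ^ 2
      + a * (a - 1) * b * Sn c N a x ^ (b - 1) * (c i * x i) ^ a := by
  have h1 : (c i * x i) ^ (a - 1 - 1) * (c i ^ 2 * x i ^ 2) = (c i * x i) ^ a := by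
    have h2 : c i ^ 2 * x i ^ 2 = (c i * x i) ^ ((2 : ℕ) : ℝ) := by
      rw [Real.rpow_natCast]; ring
    rw [h2, ← Real.rpow_add hpos]
    congr 1; push_cast; ring
  have h3 : (c i * x i) ^ (a - 1) * (c i * x i) = (c i * x i) ^ a := by
    rw [← Real.rpow_add_one hpos.ne']; ring_nf
  have hsq : ((c i * x i) ^ (a - 1)) ^ 2 * (c i ^ 2 * x i ^ 2) = ((c i * x i) ^ a) ^ 2 := by
    rw [← h3]; ring
  linear_combination (a * (a - 1) * b * Sn c N a x ^ (b - 1)) * h1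
    + (a ^ 2 * b * (b - 1) * Sn c N a x ^ (b - 1 - 1)) * hsq

private lemma nest_sum_bound {n : ℕ} (c : Fin n → ℝ) (N : Finset (Fin n))
    (μ μℓ μm : ℝ) (hμ : 0 < μ) (hμℓ : 0 < μℓ) (hm : 0 < μm) (hmℓ : μm ≤ μℓ) (hℓμ : μℓ ≤ μ)
    (x : Fin n → ℝ) (hx : ∀ i, 0 < x i) (hc : ∀ j ∈ N, 0 < c j)
    (hS : 0 < Sn c N (1/μℓ) x) :
    ∑ i ∈ N,
      ((μℓ/μ) * Sn c N (1/μℓ) x ^ ((μℓ/μ) - 1) *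
          (c i * ((1/μℓ) * (((1/μℓ) - 1) * (c i * x i) ^ ((1/μℓ) - 1 - 1) * c i)))
        + (1/μℓ) * (c i * x i) ^ ((1/μℓ) - 1) * c i *
          ((μℓ/μ) * (((μℓ/μ) - 1) * Sn c N (1/μℓ) x ^ ((μℓ/μ) - 1 - 1) *
            ((1/μℓ) * (c i * x i) ^ ((1/μℓ) - 1) * c i)))) * x i ^ 2
      ≤ 1/μ * (1/μm - 1) * Sn c N (1/μℓ) x ^ (μℓ/μ) := by
  set a := 1/μℓ with ha
  set b := μℓ/μ with hb
  set S := Sn c N a x with hSd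
  set T := ∑ i ∈ N, ((c i * x i) ^ a) ^ 2 with hT
  have hTnn : 0 ≤ T := Finset.sum_nonneg fun i _ => sq_nonneg _
  have hsum_eq : ∑ i ∈ N,
      ((b * S ^ (b - 1) * (c i * (a * ((a - 1) * (c i * x i) ^ (a - 1 - 1) * c i)))
        + a * (c i * x i) ^ (a - 1) * c i *
          (b * ((b - 1) * S ^ (b - 1 - 1) * (a * (c i * x i) ^ (a - 1) * c i)))) * x i ^ 2)
      = a ^ 2 * b * (b - 1) * S ^ (b - 1 - 1) * T
        + a * (a - 1) * b * S ^ (b - 1) * S := by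
    rw [Finset.sum_congr rfl fun i hi =>
      nest_term_eq c N a b x i (mul_pos (hc i hi) (hx i))]
    rw [Finset.sum_add_distrib, ← Finset.mul_sum, ← Finset.mul_sum, ← hT]
    have h5 : ∑ i ∈ N, (c i * x i) ^ a = S := (Sn_def c N a x).symm
    rw [h5]
  rw [hsum_eq]
  have hb1 : b ≤ 1 := by rw [hb]; exact div_le_one_of_le₀ hℓμ hμ.le
  have h0 : 0 ≤ a ^ 2 * b * S ^ (b - 1 - 1) * T := by
    have hbpos : 0 < b := by rw [hb]; positivity
    have hSp := Real.rpow_nonneg hS.le (b - 1 - 1)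
    positivity
  have hfirst : a ^ 2 * b * (b - 1) * S ^ (b - 1 - 1) * T ≤ 0 := by nlinarith [h0, hb1]
  have hSb : S ^ (b - 1) * S = S ^ b := by rw [← Real.rpow_add_one hS.ne']; ring_nf
  have hone : a - 1 ≤ 1/μm - 1 := by
    rw [ha]; exact sub_le_sub_right (one_div_le_one_div_of_le hm hmℓ) 1
  have hab : a * b = 1/μ := by rw [ha, hb]; field_simp
  have hSbpos : 0 ≤ S ^ b := (Real.rpow_pos_of_pos hS _).le
  have hsecond : a * (a - 1) * b * S ^ (b - 1) * S ≤ 1/μ * (1/μm - 1) * S ^ b := by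
    have e1 : a * (a - 1) * b * S ^ (b - 1) * S = 1/μ * (a - 1) * S ^ b := by
      rw [mul_assoc _ (S ^ (b - 1)) S, hSb]
      linear_combination ((a - 1) * S ^ b) * hab
    rw [e1]
    have h1μ : (0:ℝ) ≤ 1/μ := by positivity
    nlinarith [mul_le_mul_of_nonneg_right (mul_le_mul_of_nonneg_left hone h1μ) hSbpos]
  linarith [hfirst, hsecond]

/-- Key second-order estimate for the generalized nested logit generating
function: `∑_i (∂²G(x)/∂x⁽ⁱ⁾²)·x⁽ⁱ⁾² ≤ (1/μ)·(1/(min_ℓ μ_ℓ) − 1)·G(x)` for `x > 0`. -/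
theorem GNL_second_order_estimate
    (n : ℕ) (hn : 2 ≤ n)
    (L : Type) [Fintype L] [Nonempty L]
    (μ : ℝ) (hμ : 0 < μ)
    (μl : L → ℝ) (hμl : ∀ ℓ, 0 < μl ℓ) (hμlμ : ∀ ℓ, μl ℓ ≤ μ)
    (σ : Fin n → L → ℝ) (hσ0 : ∀ i ℓ, 0 ≤ σ i ℓ)
    (hσ1 : ∀ i, ∑ ℓ, σ i ℓ = 1)
    (hnest : ∀ ℓ : L, ∃ i, 0 < σ i ℓ)
    (G : (Fin n → ℝ) → ℝ)
    (hG : ∀ x : Fin n → ℝ, (∀ i, 0 < x i) →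
      G x = ∑ ℓ, (∑ i ∈ Finset.univ.filter (fun i => 0 < σ i ℓ),
        (σ i ℓ * x i) ^ (1 / μl ℓ)) ^ (μl ℓ / μ)) :
    ∀ x : Fin n → ℝ, (∀ i, 0 < x i) →
      ∑ i, iteratedFDeriv ℝ 2 G x ![Pi.single i 1, Pi.single i 1] * (x i) ^ 2
        ≤ 1 / μ * (1 / (⨅ ℓ, μl ℓ) - 1) * G x := by
  intro x hx
  classical
  obtain ⟨ℓ₀, hℓ₀⟩ := Finite.exists_min μl
  have hμm_eq : (⨅ ℓ, μl ℓ) = μl ℓ₀ :=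
    le_antisymm (ciInf_le (Finite.bddBelow_range μl) ℓ₀) (le_ciInf hℓ₀)
  have hμm_pos : 0 < (⨅ ℓ, μl ℓ) := hμm_eq ▸ hμl ℓ₀
  have hμm_le : ∀ ℓ, (⨅ ℓ, μl ℓ) ≤ μl ℓ := fun ℓ => hμm_eq ▸ hℓ₀ ℓ
  set N : L → Finset (Fin n) := fun ℓ => Finset.univ.filter (fun i => 0 < σ i ℓ) with hNdef
  set c : L → Fin n → ℝ := fun ℓ j => σ j ℓ with hcdef
  have hcN : ∀ ℓ, ∀ j ∈ N ℓ, 0 < c ℓ j := fun ℓ j hj => (Finset.mem_filter.mp hj).2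
  have hterm : ∀ ℓ (y : Fin n → ℝ), (∀ i, 0 < y i) → ∀ j ∈ N ℓ, 0 < c ℓ j * y j :=
    fun ℓ y hy j hj => mul_pos (hcN ℓ j hj) (hy j)
  have hSpos : ∀ ℓ (y : Fin n → ℝ), (∀ i, 0 < y i) → 0 < Sn (c ℓ) (N ℓ) (1/μl ℓ) y := by
    intro ℓ y hy
    obtain ⟨i0, hi0⟩ := hnest ℓ
    have hi0N : i0 ∈ N ℓ := Finset.mem_filter.mpr ⟨Finset.mem_univ _, hi0⟩
    rw [Sn_def]
    exact Finset.sum_pos' (fun j hj => Real.rpow_nonneg (hterm ℓ y hy j hj).le _)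
      ⟨i0, hi0N, Real.rpow_pos_of_pos (hterm ℓ y hy i0 hi0N) _⟩
  have hPopen : IsOpen {y : Fin n → ℝ | ∀ i, 0 < y i} := by
    have he : {y : Fin n → ℝ | ∀ i, 0 < y i} = ⋂ i, {y : Fin n → ℝ | 0 < y i} := by
      ext y; simp [Set.mem_iInter]
    rw [he]
    exact isOpen_iInter_of_finite fun i => isOpen_lt continuous_const (continuous_apply i)
  have hGF : ∀ y ∈ {y : Fin n → ℝ | ∀ i, 0 < y i},
      G y = ∑ ℓ, Sn (c ℓ) (N ℓ) (1/μl ℓ) y ^ (μl ℓ/μ) := by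
    intro y hy
    rw [hG y hy]
    rfl
  have hFd : ∀ y ∈ {y : Fin n → ℝ | ∀ i, 0 < y i},
      HasFDerivAt (fun z => ∑ ℓ, Sn (c ℓ) (N ℓ) (1/μl ℓ) z ^ (μl ℓ/μ))
        (∑ ℓ, Fnder (c ℓ) (N ℓ) (1/μl ℓ) (μl ℓ/μ) y) y :=
    fun y hy => HasFDerivAt.fun_sum fun ℓ _ => Fn_hasFDerivAt (hterm ℓ y hy) (hSpos ℓ y hy)
  have hfderivG : ∀ y ∈ {y : Fin n → ℝ | ∀ i, 0 < y i},
      fderiv ℝ G y = ∑ ℓ, Fnder (c ℓ) (N ℓ) (1/μl ℓ) (μl ℓ/μ) y := by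
    intro y hy
    have hev : G =ᶠ[nhds y] (fun z => ∑ ℓ, Sn (c ℓ) (N ℓ) (1/μl ℓ) z ^ (μl ℓ/μ)) :=
      Filter.eventuallyEq_of_mem (hPopen.mem_nhds hy) hGF
    rw [hev.fderiv_eq, (hFd y hy).fderiv]
  have hQd : HasFDerivAt (fun y => ∑ ℓ, Fnder (c ℓ) (N ℓ) (1/μl ℓ) (μl ℓ/μ) y)
      (∑ ℓ, ∑ j ∈ N ℓ, (Qn (c ℓ) (N ℓ) (1/μl ℓ) (μl ℓ/μ) j x).smulRight
        (ContinuousLinearMap.proj j : (Fin n → ℝ) →L[ℝ] ℝ)) x := by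
    have he : (fun y => ∑ ℓ, Fnder (c ℓ) (N ℓ) (1/μl ℓ) (μl ℓ/μ) y)
        = fun y => ∑ ℓ, ∑ j ∈ N ℓ, qn (c ℓ) (N ℓ) (1/μl ℓ) (μl ℓ/μ) j y •
            (ContinuousLinearMap.proj j : (Fin n → ℝ) →L[ℝ] ℝ) := by
      funext y; exact Finset.sum_congr rfl fun ℓ _ => rfl
    rw [he]
    exact HasFDerivAt.fun_sum fun ℓ _ => HasFDerivAt.fun_sum fun j hj =>
      (qn_hasFDerivAt (b := μl ℓ/μ) (hterm ℓ x hx) (hSpos ℓ x hx) (hterm ℓ x hx j hj)).smul_const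
        (ContinuousLinearMap.proj j : (Fin n → ℝ) →L[ℝ] ℝ)
  have h2nd : fderiv ℝ (fderiv ℝ G) x
      = ∑ ℓ, ∑ j ∈ N ℓ, (Qn (c ℓ) (N ℓ) (1/μl ℓ) (μl ℓ/μ) j x).smulRight
        (ContinuousLinearMap.proj j : (Fin n → ℝ) →L[ℝ] ℝ) := by
    have hev2 : fderiv ℝ G =ᶠ[nhds x]
        (fun y => ∑ ℓ, Fnder (c ℓ) (N ℓ) (1/μl ℓ) (μl ℓ/μ) y) :=
      Filter.eventuallyEq_of_mem (hPopen.mem_nhds hx) hfderivG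
    rw [hev2.fderiv_eq, hQd.fderiv]
  have heval : ∀ i, iteratedFDeriv ℝ 2 G x ![Pi.single i 1, Pi.single i 1]
      = ∑ ℓ, (if i ∈ N ℓ then
          (Qn (c ℓ) (N ℓ) (1/μl ℓ) (μl ℓ/μ) i x) (Pi.single i 1) else 0) := by
    intro i
    rw [iteratedFDeriv_two_apply]
    simp only [Matrix.cons_val_zero, Matrix.cons_val_one, Matrix.head_cons]
    rw [h2nd]
    simp [ContinuousLinearMap.sum_apply, ContinuousLinearMap.smulRight_apply,
      ContinuousLinearMap.proj_apply, Pi.single_apply, mul_ite, mul_one, mul_zero,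
      Finset.sum_ite_eq']
  calc ∑ i, iteratedFDeriv ℝ 2 G x ![Pi.single i 1, Pi.single i 1] * (x i) ^ 2
      = ∑ ℓ, ∑ i ∈ N ℓ,
          (Qn (c ℓ) (N ℓ) (1/μl ℓ) (μl ℓ/μ) i x) (Pi.single i 1) * x i ^ 2 := by
        rw [Finset.sum_congr rfl fun i _ => by rw [heval i]]
        rw [Finset.sum_congr rfl fun i (_ : i ∈ Finset.univ) => Finset.sum_mul _ _ (x i ^ 2)]
        rw [Finset.sum_comm]
        refine Finset.sum_congr rfl fun ℓ _ => ?_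
        simp only [ite_mul, zero_mul]
        rw [Finset.sum_ite_mem, Finset.univ_inter]
    _ ≤ ∑ ℓ, 1/μ * (1/(⨅ ℓ, μl ℓ) - 1) * Sn (c ℓ) (N ℓ) (1/μl ℓ) x ^ (μl ℓ/μ) := by
        refine Finset.sum_le_sum fun ℓ _ => ?_
        have hb := nest_sum_bound (c ℓ) (N ℓ) μ (μl ℓ) (⨅ ℓ, μl ℓ) hμ (hμl ℓ)
          hμm_pos (hμm_le ℓ) (hμlμ ℓ) x hx (hcN ℓ) (hSpos ℓ x hx)
        refine le_trans (le_of_eq (Finset.sum_congr rfl fun i hi => ?_)) hb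
        rw [Qn_apply_single (c ℓ) (N ℓ) (1/μl ℓ) (μl ℓ/μ) x i hi]
    _ = 1 / μ * (1 / (⨅ ℓ, μl ℓ) - 1) * G x := by
        rw [← Finset.mul_sum, hGF x hx]
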